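/- Let (Ω,ℱ,ℙ) be a probability space and E_n, n ∈ ℕ, events satisfying ℙ(E_n) ≤ C (log n)^{-1-ε} for some constants C > 0 and ε > 0 and all n ≥ 2. Then for ℙ-almost every ω, the set {n ∈ ℕ : ω ∈ E_n} has natural density zero, i.e. (1/N) ∑_{n=1}^N 1_{E_n}(ω) → 0 as N → ∞. -/

import Mathlib

open Filter MeasureTheory

/-- Borel–Cantelli in density: if `ℙ(E_n) ≤ C (log n)^{-1-ε}` for `n ≥ 2`, then almost surely
the set `{n : ω ∈ E_n}` has natural density zero. -/
theorem borel_cantelli_in_density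
    {Ω : Type*} [MeasurableSpace Ω] (μ : Measure Ω) [IsProbabilityMeasure μ]
    (E : ℕ → Set Ω) (hE : ∀ n, MeasurableSet (E n))
    (C ε : ℝ) (hC : 0 < C) (hε : 0 < ε)
    (hbound : ∀ n : ℕ, 2 ≤ n → μ (E n) ≤ ENNReal.ofReal (C * Real.log n ^ (-(1 + ε)))) :
    ∀ᵐ ω ∂μ, Tendsto
      (fun N : ℕ => (N : ℝ)⁻¹ * ∑ n ∈ Finset.Icc 1 N, (E n).indicator (fun _ => (1 : ℝ)) ω)
      atTop (nhds 0) := by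
  classical
  set T : ℕ → Ω → ENNReal := fun N ω =>
    ∑ n ∈ Finset.Icc 1 N, (E n).indicator (fun _ => (1 : ENNReal)) ω with hTdef
  set F : ℕ → Ω → ENNReal := fun k ω => ((2 : ENNReal) ^ k)⁻¹ * T (2 ^ k) ω with hFdef
  have hTmeas : ∀ N, Measurable (T N) := fun N =>
    Finset.measurable_sum _ fun n _ => measurable_const.indicator (hE n)
  have hFmeas : ∀ k, Measurable (F k) := fun k => (hTmeas _).const_mul _
  have hTint : ∀ N, ∫⁻ ω, T N ω ∂μ = ∑ n ∈ Finset.Icc 1 N, μ (E n) := by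
    intro N
    rw [hTdef]
    rw [lintegral_finset_sum _ fun n _ => measurable_const.indicator (hE n)]
    exact Finset.sum_congr rfl fun n _ => lintegral_indicator_one (hE n)
  have hFint : ∀ k, ∫⁻ ω, F k ω ∂μ
      = ((2 : ENNReal) ^ k)⁻¹ * ∑ n ∈ Finset.Icc 1 (2 ^ k), μ (E n) := by
    intro k
    rw [hFdef]
    simp only
    rw [lintegral_const_mul _ (hTmeas _), hTint]
  -- the summable bound
  set u : ℕ → ℝ := fun k =>
    Real.sqrt 2 * (Real.sqrt 2 / 2) ^ k + C * ((k : ℝ) / 2 * Real.log 2) ^ (-(1 + ε)) with hudef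
  have hlog2 : (0:ℝ) < Real.log 2 := Real.log_pos one_lt_two
  have hsqrt2 : (1:ℝ) ≤ Real.sqrt 2 := by
    rw [show (1:ℝ) = Real.sqrt 1 by simp]
    exact Real.sqrt_le_sqrt one_le_two
  have hbk : ∀ k, ∫⁻ ω, F k ω ∂μ ≤ ENNReal.ofReal (u k) := by
    intro k
    rw [hFint]
    rcases Nat.eq_zero_or_pos k with hk0 | hk1
    · subst hk0
      have h1 : ((2 : ENNReal) ^ 0)⁻¹ * ∑ n ∈ Finset.Icc 1 (2 ^ 0), μ (E n) ≤ 1 := by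
        simp [prob_le_one]
      refine h1.trans ?_
      have hz : ((0:ℕ):ℝ) / 2 * Real.log 2 = 0 := by norm_num
      have : u 0 = Real.sqrt 2 := by
        simp only [hudef, hz, Real.zero_rpow (show -(1+ε) ≠ 0 by intro hcon; linarith)]
        simp
      rw [this]
      rw [show (1:ENNReal) = ENNReal.ofReal 1 by simp]
      exact ENNReal.ofReal_le_ofReal hsqrt2
    · set h : ℕ := (k + 1) / 2 with hhdef
      have hh1 : 1 ≤ h := by omega
      have hhk : h ≤ k := by omega
      have h2h : (2:ℕ) ≤ 2 ^ h := by
        calc (2:ℕ) = 2 ^ 1 := by norm_num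
        _ ≤ 2 ^ h := Nat.pow_le_pow_right (by norm_num) hh1
      -- split the sum
      have hsplit : ∑ n ∈ Finset.Icc 1 (2 ^ k), μ (E n)
          = (∑ n ∈ Finset.Ioc 0 (2 ^ h), μ (E n)) + ∑ n ∈ Finset.Ioc (2 ^ h) (2 ^ k), μ (E n) := by
        have hIcc : Finset.Icc 1 (2 ^ k) = Finset.Ioc 0 (2 ^ k) := by
          ext x; simp [Nat.lt_iff_add_one_le]
        rw [hIcc,
          ← Finset.sum_Ioc_consecutive _ (Nat.zero_le _) (Nat.pow_le_pow_right (by norm_num) hhk)]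
      rw [hsplit]
      -- bound each part
      have hb1 : ∑ n ∈ Finset.Ioc 0 (2 ^ h), μ (E n) ≤ (2 ^ h : ℕ) * 1 := by
        have := Finset.sum_le_card_nsmul (Finset.Ioc 0 (2 ^ h)) (fun n => μ (E n)) 1
          (fun n _ => prob_le_one)
        simpa [Nat.card_Ioc, nsmul_eq_mul] using this
      set c : ℝ := C * ((k : ℝ) / 2 * Real.log 2) ^ (-(1 + ε)) with hcdef
      have hc0 : 0 ≤ c := by
        apply mul_nonneg hC.le
        apply Real.rpow_nonneg
        positivity
      have hb2 : ∑ n ∈ Finset.Ioc (2 ^ h) (2 ^ k), μ (E n)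
          ≤ (2 ^ k : ℕ) * ENNReal.ofReal c := by
        have hterm : ∀ n ∈ Finset.Ioc (2 ^ h) (2 ^ k), μ (E n) ≤ ENNReal.ofReal c := by
          intro n hn
          rw [Finset.mem_Ioc] at hn
          have hn2 : 2 ≤ n := le_trans h2h (le_of_lt hn.1)
          refine (hbound n hn2).trans (ENNReal.ofReal_le_ofReal ?_)
          apply mul_le_mul_of_nonneg_left _ hC.le
          have hbase : (k : ℝ) / 2 * Real.log 2 ≤ Real.log n := by
            have h1 : (k : ℝ) / 2 ≤ (h : ℝ) := by
              rw [div_le_iff₀ (by norm_num : (0:ℝ) < 2)]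
              exact_mod_cast (by omega : k ≤ h * 2)
            have h2 : (h : ℝ) * Real.log 2 = Real.log ((2:ℝ) ^ h) := by
              rw [Real.log_pow]
            have h3 : Real.log ((2:ℝ) ^ h) ≤ Real.log n := by
              apply Real.log_le_log (by positivity)
              have : (2:ℕ) ^ h ≤ n := le_of_lt hn.1
              exact_mod_cast this
            nlinarith [mul_le_mul_of_nonneg_right h1 hlog2.le]
          have hpos : (0:ℝ) < (k : ℝ) / 2 * Real.log 2 := by
            have : (0:ℝ) < (k:ℝ) := by exact_mod_cast hk1
            positivity
          exact Real.rpow_le_rpow_of_nonpos hpos hbase (by linarith)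
        have := Finset.sum_le_card_nsmul (Finset.Ioc (2^h) (2^k)) (fun n => μ (E n))
          (ENNReal.ofReal c) hterm
        refine this.trans ?_
        rw [nsmul_eq_mul]
        have hcard : (Finset.Ioc (2 ^ h) (2 ^ k)).card ≤ 2 ^ k := by
          rw [Nat.card_Ioc]; exact Nat.sub_le _ _
        exact mul_le_mul_left (by exact_mod_cast Nat.cast_le.mpr hcard) _
      -- combine
      have hcomb : ((2 : ENNReal) ^ k)⁻¹
            * ((∑ n ∈ Finset.Ioc 0 (2 ^ h), μ (E n)) + ∑ n ∈ Finset.Ioc (2 ^ h) (2 ^ k), μ (E n))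
          ≤ ((2 : ENNReal) ^ k)⁻¹ * ((2 ^ h : ℕ) * 1) + ENNReal.ofReal c := by
        rw [mul_add]
        refine add_le_add (mul_le_mul_right hb1 _) ?_
        calc ((2 : ENNReal) ^ k)⁻¹ * (∑ n ∈ Finset.Ioc (2 ^ h) (2 ^ k), μ (E n))
              ≤ ((2 : ENNReal) ^ k)⁻¹ * ((2 ^ k : ℕ) * ENNReal.ofReal c) :=
                mul_le_mul_right hb2 _
          _ = (((2 : ENNReal) ^ k)⁻¹ * (2 : ENNReal) ^ k) * ENNReal.ofReal c := by
              rw [← mul_assoc]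
              congr 2
              push_cast
              ring
          _ = ENNReal.ofReal c := by
              rw [ENNReal.inv_mul_cancel (by positivity) (by simp)]
              simp
      refine hcomb.trans ?_
      have hgeo : ((2 : ENNReal) ^ k)⁻¹ * ((2 ^ h : ℕ) * 1)
          ≤ ENNReal.ofReal (Real.sqrt 2 * (Real.sqrt 2 / 2) ^ k) := by
        have heq : ((2 : ENNReal) ^ k)⁻¹ * ((2 ^ h : ℕ) * 1)
            = ENNReal.ofReal ((2:ℝ) ^ h / 2 ^ k) := by
          have e1 : ∀ m : ℕ, ENNReal.ofReal ((2:ℝ) ^ m) = (2 : ENNReal) ^ m := by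
            intro m
            rw [ENNReal.ofReal_pow (by norm_num)]
            norm_num
          rw [ENNReal.ofReal_div_of_pos (by positivity), e1, e1, mul_one,
            ENNReal.div_eq_inv_mul]
          congr 1
          push_cast
          ring
        rw [heq]
        apply ENNReal.ofReal_le_ofReal
        have hpow : (2:ℝ) ^ h ≤ Real.sqrt 2 ^ (k + 1) := by
          have h1 : (2:ℝ) ^ h = Real.sqrt 2 ^ (2 * h) := by
            rw [pow_mul, Real.sq_sqrt (by norm_num : (0:ℝ) ≤ 2)]
          rw [h1]
          exact pow_le_pow_right₀ hsqrt2 (by omega)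
        rw [div_le_iff₀ (by positivity)]
        calc (2:ℝ) ^ h ≤ Real.sqrt 2 ^ (k+1) := hpow
          _ = Real.sqrt 2 * Real.sqrt 2 ^ k := by ring
          _ = Real.sqrt 2 * (Real.sqrt 2 / 2) ^ k * 2 ^ k := by
              rw [div_pow]; field_simp
      calc ((2 : ENNReal) ^ k)⁻¹ * ((2 ^ h : ℕ) * 1) + ENNReal.ofReal c
          ≤ ENNReal.ofReal (Real.sqrt 2 * (Real.sqrt 2 / 2) ^ k) + ENNReal.ofReal c :=
            add_le_add_left hgeo _
        _ = ENNReal.ofReal (u k) := by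
            rw [← ENNReal.ofReal_add (by positivity) hc0]
  -- summability of u
  have hu_nonneg : ∀ k, 0 ≤ u k := by
    intro k
    have h3 : 0 ≤ C * ((k : ℝ) / 2 * Real.log 2) ^ (-(1 + ε)) :=
      mul_nonneg hC.le (Real.rpow_nonneg (mul_nonneg (by positivity) hlog2.le) _)
    have h2 : (0:ℝ) ≤ Real.sqrt 2 * (Real.sqrt 2 / 2) ^ k := by positivity
    exact add_nonneg h2 h3
  have hu_sum : Summable u := by
    apply Summable.add
    · apply Summable.mul_left
      apply summable_geometric_of_lt_one (by positivity)
      rw [div_lt_one (by norm_num : (0:ℝ) < 2)]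
      have hs : Real.sqrt 2 * Real.sqrt 2 = 2 := Real.mul_self_sqrt (by norm_num)
      nlinarith [hs, hsqrt2]
    · have hs : Summable (fun k : ℕ => (k:ℝ) ^ (-(1+ε))) :=
        Real.summable_nat_rpow.mpr (by linarith)
      have := (hs.mul_left ((Real.log 2 / 2) ^ (-(1+ε)))).mul_left C
      apply this.congr
      intro k
      rw [show (k : ℝ) / 2 * Real.log 2 = (k:ℝ) * (Real.log 2 / 2) by ring]
      rw [Real.mul_rpow (by positivity) (by positivity)]
      ring
  have htsum : ∑' k, ∫⁻ ω, F k ω ∂μ ≠ ⊤ := by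
    apply ne_top_of_le_ne_top _ (ENNReal.tsum_le_tsum hbk)
    rw [← ENNReal.ofReal_tsum_of_nonneg hu_nonneg hu_sum]
    exact ENNReal.ofReal_ne_top
  have hInt : ∫⁻ ω, ∑' k, F k ω ∂μ ≠ ⊤ := by
    rw [lintegral_tsum fun k => (hFmeas k).aemeasurable]
    exact htsum
  have hae : ∀ᵐ ω ∂μ, ∑' k, F k ω < ⊤ :=
    ae_lt_top (Measurable.ennreal_tsum hFmeas) hInt
  filter_upwards [hae] with ω hω
  have h1 : Tendsto (fun k => F k ω) atTop (nhds 0) :=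
    ENNReal.tendsto_atTop_zero_of_tsum_ne_top hω.ne
  -- real partial sums
  set S : ℕ → ℝ := fun N => ∑ n ∈ Finset.Icc 1 N, (E n).indicator (fun _ => (1 : ℝ)) ω with hSdef
  have hS0 : ∀ N, 0 ≤ S N := fun N =>
    Finset.sum_nonneg fun n _ => Set.indicator_nonneg (fun _ _ => zero_le_one) ω
  have hSmono : Monotone S := by
    intro a b hab
    apply Finset.sum_le_sum_of_subset_of_nonneg (Finset.Icc_subset_Icc_right hab)
    exact fun n _ _ => Set.indicator_nonneg (fun _ _ => zero_le_one) ω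
  have hTS : ∀ N, T N ω = ENNReal.ofReal (S N) := by
    intro N
    rw [hSdef, ENNReal.ofReal_sum_of_nonneg
      (fun n _ => Set.indicator_nonneg (fun _ _ => zero_le_one) ω)]
    refine Finset.sum_congr rfl fun n _ => ?_
    by_cases hn : ω ∈ E n <;> simp [Set.indicator, hn]
  have hFω : ∀ k, F k ω = ENNReal.ofReal (((2:ℝ) ^ k)⁻¹ * S (2 ^ k)) := by
    intro k
    rw [hFdef]
    simp only
    rw [hTS, ENNReal.ofReal_mul (by positivity : (0:ℝ) ≤ ((2:ℝ) ^ k)⁻¹)]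
    congr 1
    rw [ENNReal.ofReal_inv_of_pos (by positivity), ENNReal.ofReal_pow (by norm_num)]
    norm_num
  have h2 : Tendsto (fun k => ((2:ℝ) ^ k)⁻¹ * S (2 ^ k)) atTop (nhds 0) := by
    have h3 : Tendsto (fun k => (F k ω).toReal) atTop (nhds (0 : ENNReal).toReal) :=
      (ENNReal.tendsto_toReal (by simp)).comp h1
    simp only [ENNReal.toReal_zero] at h3
    apply h3.congr
    intro k
    rw [hFω, ENNReal.toReal_ofReal (mul_nonneg (by positivity) (hS0 _))]
  -- squeeze
  have hlogtendsto : Tendsto (fun N : ℕ => Nat.log 2 N + 1) atTop atTop := by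
    apply tendsto_atTop_atTop.2
    intro m
    refine ⟨2 ^ m, fun N hN => ?_⟩
    have hN0 : N ≠ 0 := by
      have := pow_pos (show 0 < 2 by norm_num) m
      omega
    have := (Nat.le_log_iff_pow_le one_lt_two hN0).mpr hN
    omega
  have hRHS : Tendsto (fun N : ℕ => 2 * (((2:ℝ) ^ (Nat.log 2 N + 1))⁻¹ * S (2 ^ (Nat.log 2 N + 1))))
      atTop (nhds 0) := by
    rw [show (0:ℝ) = 2 * 0 by ring]
    exact (h2.comp hlogtendsto).const_mul 2
  refine tendsto_of_tendsto_of_tendsto_of_le_of_le' tendsto_const_nhds hRHS ?_ ?_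
  · filter_upwards with N
    have := hS0 N
    positivity
  · filter_upwards [eventually_ge_atTop 1] with N hN
    set k := Nat.log 2 N with hk
    have hlo : (2:ℕ) ^ k ≤ N := Nat.pow_log_le_self 2 (by omega)
    have hhi : N ≤ 2 ^ (k + 1) := le_of_lt (Nat.lt_pow_succ_log_self one_lt_two N)
    have hNpos : (0:ℝ) < (N:ℝ) := by exact_mod_cast hN
    have step1 : (N : ℝ)⁻¹ * S N ≤ ((2:ℝ) ^ k)⁻¹ * S (2 ^ (k + 1)) := by
      apply mul_le_mul
      · apply inv_anti₀ (by positivity)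
        exact_mod_cast hlo
      · exact hSmono hhi
      · exact hS0 N
      · positivity
    refine step1.trans (le_of_eq ?_)
    rw [pow_succ]
    field_simp
    ring
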